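/- For the PIE iterates x, the per-step changes vanish in the limit: the sequence n ↦ ‖x (n+1) − x n‖ tends to 0 as n → ∞. Consequently, for every δ > 0 there exists N such that ‖x (n+1) − x n‖ < δ for all n ≥ N. -/
import Mathlib


open Finset Filter in
/-- The per-step changes of the PIE iterates vanish in the limit. -/
theorem pie_step_diff_tendsto_zero {V : Type*} [NormedAddCommGroup V] [NormedSpace ℝ V]
    (α₀ lam : ℝ) (hα₀ : 0 < α₀) (hα₀' : α₀ < 1) (hlam : 0 ≤ lam)
    (x₀ : V) (e : ℕ → V) (x : ℕ → V)
    (hx : ∀ N : ℕ, x N = (Real.sqrt α₀) ^ N • x₀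
        + lam • ∑ i ∈ Finset.Icc 1 N, (Real.sqrt α₀) ^ i • e i)
    (C₁ C₂ : ℝ) (hC₁ : 0 ≤ C₁) (hC₂ : 0 ≤ C₂)
    (hx₀ : ‖x₀‖ ≤ C₁) (he : ∀ n : ℕ, 1 ≤ n → ‖e n‖ ≤ C₂) :
    Filter.Tendsto (fun n : ℕ => ‖x (n + 1) - x n‖) Filter.atTop (nhds 0) ∧
      ∀ δ : ℝ, 0 < δ → ∃ N : ℕ, ∀ n : ℕ, N ≤ n → ‖x (n + 1) - x n‖ < δ := by
  set s := Real.sqrt α₀ with hs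
  have hs0 : 0 < s := Real.sqrt_pos.mpr hα₀
  have hs1 : s < 1 := by
    rw [hs, show (1 : ℝ) = Real.sqrt 1 by simp]
    exact Real.sqrt_lt_sqrt hα₀.le hα₀'
  set M := 2 * C₁ + lam * C₂ with hM
  have key : ∀ n : ℕ, ‖x (n + 1) - x n‖ ≤ s ^ n * M := by
    intro n
    have hdiff : x (n + 1) - x n
        = (s ^ (n + 1) - s ^ n) • x₀ + (lam * s ^ (n + 1)) • e (n + 1) := by
      rw [hx (n + 1), hx n, Finset.sum_Icc_succ_top (by omega : 1 ≤ n + 1)]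
      rw [smul_add, sub_smul, smul_smul]
      abel
    rw [hdiff]
    calc ‖(s ^ (n + 1) - s ^ n) • x₀ + (lam * s ^ (n + 1)) • e (n + 1)‖
        ≤ ‖(s ^ (n + 1) - s ^ n) • x₀‖ + ‖(lam * s ^ (n + 1)) • e (n + 1)‖ :=
          norm_add_le _ _
      _ = |s ^ (n + 1) - s ^ n| * ‖x₀‖ + |lam * s ^ (n + 1)| * ‖e (n + 1)‖ := by
          rw [norm_smul, norm_smul, Real.norm_eq_abs, Real.norm_eq_abs]
      _ ≤ (s ^ n * 2) * C₁ + (lam * s ^ n) * C₂ := by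
          gcongr ?_ + ?_
          · apply mul_le_mul _ hx₀ (norm_nonneg _) (by positivity)
            have hp : s ^ (n + 1) = s ^ n * s := pow_succ s n
            rw [abs_sub_comm, abs_of_nonneg (by nlinarith [pow_pos hs0 n])]
            nlinarith [pow_pos hs0 n]
          · apply mul_le_mul _ (he (n + 1) (by omega)) (norm_nonneg _) (by positivity)
            rw [abs_of_nonneg (by positivity), pow_succ]
            nlinarith [pow_pos hs0 n, mul_nonneg hlam (pow_pos hs0 n).le]
      _ = s ^ n * M := by ring
  have htend : Filter.Tendsto (fun n : ℕ => ‖x (n + 1) - x n‖) Filter.atTop (nhds 0) := by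
    have h1 : Filter.Tendsto (fun n : ℕ => s ^ n * M) Filter.atTop (nhds 0) := by
      have := (tendsto_pow_atTop_nhds_zero_of_lt_one hs0.le hs1).mul_const M
      simpa using this
    exact squeeze_zero (fun n => norm_nonneg _) key h1
  refine ⟨htend, fun δ hδ => ?_⟩
  have := (Metric.tendsto_atTop.mp htend) δ hδ
  obtain ⟨N, hN⟩ := this
  exact ⟨N, fun n hn => by simpa [Real.dist_eq, abs_of_nonneg (norm_nonneg _)] using hN n hn⟩
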